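/- Let m ≥ 2 and define φ(s) = s(1 − s^m)/((1−s)(1 − (1−s)^m)) for s ∈ (0, 1/2]. Then φ is strictly increasing on (0, 1/2], φ(s) → 1/m as s → 0⁺, and φ(1/2) = 1. -/

import Mathlib

open Filter Set

private noncomputable def gsum (m : ℕ) (x : ℝ) : ℝ := ∑ k ∈ Finset.range m, x ^ k

private lemma gsum_mul (m : ℕ) (x : ℝ) : (1 - x) * gsum m x = 1 - x ^ m := by
  have := geom_sum_mul x m
  unfold gsum
  nlinarith [this]

private lemma gsum_pos (m : ℕ) (hm : 0 < m) {x : ℝ} (hx : 0 ≤ x) : 0 < gsum m x := by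
  unfold gsum
  apply Finset.sum_pos'
  · intro i _; positivity
  · exact ⟨0, Finset.mem_range.mpr hm, by norm_num⟩

private lemma gsum_lt (m : ℕ) (hm : 2 ≤ m) {x y : ℝ} (hx : 0 ≤ x) (hxy : x < y) :
    gsum m x < gsum m y := by
  unfold gsum
  apply Finset.sum_lt_sum
  · intro i _; exact pow_le_pow_left₀ hx hxy.le i
  · exact ⟨1, Finset.mem_range.mpr (by omega), by simpa using hxy⟩

private lemma phi_eq (m : ℕ) (φ : ℝ → ℝ)
    (hφ : ∀ s, φ s = s * (1 - s ^ m) / ((1 - s) * (1 - (1 - s) ^ m)))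
    {s : ℝ} (h0 : 0 < s) (h1 : s < 1) :
    φ s = gsum m s / gsum m (1 - s) := by
  rw [hφ]
  have e1 : 1 - s ^ m = (1 - s) * gsum m s := (gsum_mul m s).symm
  have e2 : 1 - (1 - s) ^ m = s * gsum m (1 - s) := by
    have := gsum_mul m (1 - s); linarith [this]
  rw [e1, e2]
  have hs : s ≠ 0 := h0.ne'
  have hs1 : (1 : ℝ) - s ≠ 0 := by linarith
  rw [show s * ((1 - s) * gsum m s) = (s * (1 - s)) * gsum m s by ring,
    show (1 - s) * (s * gsum m (1 - s)) = (s * (1 - s)) * gsum m (1 - s) by ring,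
    mul_div_mul_left _ _ (mul_ne_zero hs hs1)]

private lemma gsum_cont (m : ℕ) : Continuous (gsum m) := by
  unfold gsum
  exact continuous_finset_sum _ fun i _ => continuous_pow i

theorem phi_strict_mono_limit
    (m : ℕ) (hm : 2 ≤ m) (φ : ℝ → ℝ)
    (hφ : ∀ s, φ s = s * (1 - s ^ m) / ((1 - s) * (1 - (1 - s) ^ m))) :
    StrictMonoOn φ (Ioc (0:ℝ) (1/2)) ∧
    Tendsto φ (nhdsWithin 0 (Ioi (0:ℝ))) (nhds (1 / (m:ℝ))) ∧
    φ (1/2) = 1 := by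
  have hm0 : 0 < m := by omega
  refine ⟨?_, ?_, ?_⟩
  · intro s hs t ht hst
    have hs1 : s < 1 := lt_of_le_of_lt hs.2 (by norm_num)
    have ht1 : t < 1 := lt_of_le_of_lt ht.2 (by norm_num)
    rw [phi_eq m φ hφ hs.1 hs1, phi_eq m φ hφ ht.1 ht1]
    have h1 : gsum m s < gsum m t := gsum_lt m hm hs.1.le hst
    have h2 : gsum m (1 - t) < gsum m (1 - s) := gsum_lt m hm (by linarith) (by linarith)
    have p1 : 0 < gsum m s := gsum_pos m hm0 hs.1.le
    have p2 : 0 < gsum m (1 - t) := gsum_pos m hm0 (by linarith)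
    exact div_lt_div₀ h1 h2.le (gsum_pos m hm0 ht.1.le).le p2
  · have hcont : Tendsto (fun s => gsum m s / gsum m (1 - s)) (nhdsWithin 0 (Ioi (0:ℝ)))
        (nhds (gsum m 0 / gsum m 1)) := by
      apply Tendsto.mono_left ?_ nhdsWithin_le_nhds
      have : ContinuousAt (fun s => gsum m s / gsum m (1 - s)) 0 := by
        apply ContinuousAt.div
        · exact (gsum_cont m).continuousAt
        · exact ((gsum_cont m).comp (by continuity)).continuousAt
        · simpa using (gsum_pos m hm0 (by norm_num : (0:ℝ) ≤ 1)).ne'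
      simpa using this.tendsto
    have hg0 : gsum m 0 = 1 := by
      unfold gsum
      rw [zero_geom_sum]
      simp [hm0.ne']
    have hg1 : gsum m 1 = m := by unfold gsum; simp
    rw [hg0, hg1] at hcont
    apply hcont.congr'
    filter_upwards [self_mem_nhdsWithin,
      eventually_nhdsWithin_of_eventually_nhds
        (Filter.Tendsto.eventually_lt_const (by norm_num : (0:ℝ) < 1) tendsto_id)] with s hs h1
    exact (phi_eq m φ hφ hs h1).symm
  · rw [hφ]
    have h : (1:ℝ) - (1/2) ^ m ≠ 0 := by
      have : (1/2:ℝ) ^ m < 1 := pow_lt_one₀ (by norm_num) (by norm_num) hm0.ne'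
      nlinarith
    norm_num
    exact h
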